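/- Let p ≥ 7 be a prime with p ≡ 3 (mod 4), and set S_r = ∑_{t=1}^{p-1} t^r. Then in ℤ_(p): S_p − (p²/2)·S_{p−1} ≡ −(p⁵/24)·(p−1)(p−2)·B_{p−3} (mod p⁶). -/

import Mathlib

noncomputable section

/-- `i` in the Gaussian integers. -/
def Ig : GaussianInt := ⟨0, 1⟩

/-- Classical power sum `S_r(N) = ∑_{t=1}^N t^r`. -/
def Sps (r N : ℕ) : ℤ := ∑ t ∈ Finset.Icc 1 N, (t : ℤ) ^ r

/-- Gaussian power sum `F_n(k,m) = ∑_{a=1}^k ∑_{b=1}^m (a+bi)^n`. -/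
def Fg (n k m : ℕ) : GaussianInt :=
  ∑ a ∈ Finset.Icc 1 k, ∑ b ∈ Finset.Icc 1 m, ((a : GaussianInt) + (b : GaussianInt) * Ig) ^ n

/-- Square Gaussian power sum `G_n(N) = F_n(N-1,N-1)`. -/
def Gg (n N : ℕ) : GaussianInt := Fg n (N - 1) (N - 1)

namespace Stmt17Aux

open Finset

lemma ch2 (n : ℕ) : (n + 2).choose 2 * 2 = (n + 2) * (n + 1) := by
  induction n with
  | zero => rfl
  | succ m ih =>
    have h : (m + 1 + 2).choose 2 = (m + 2).choose 1 + (m + 2).choose 2 :=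
      Nat.choose_succ_succ (m + 2) 1
    calc (m + 1 + 2).choose 2 * 2 = ((m + 2).choose 1 + (m + 2).choose 2) * 2 := by rw [h]
      _ = (m + 2) * 2 + (m + 2).choose 2 * 2 := by rw [Nat.choose_one_right]; ring
      _ = (m + 2) * 2 + (m + 2) * (m + 1) := by rw [ih]
      _ = (m + 1 + 2) * (m + 1 + 1) := by ring

lemma ch3 (n : ℕ) : (n + 3).choose 3 * 6 = (n + 3) * (n + 2) * (n + 1) := by
  induction n with
  | zero => rfl
  | succ m ih =>
    have h : (m + 1 + 3).choose 3 = (m + 3).choose 2 + (m + 3).choose 3 :=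
      Nat.choose_succ_succ (m + 3) 2
    calc (m + 1 + 3).choose 3 * 6 = (m + 3).choose 2 * 2 * 3 + (m + 3).choose 3 * 6 := by
          rw [h]; ring
      _ = (m + 3) * (m + 2) * 3 + (m + 3) * (m + 2) * (m + 1) := by
          rw [show m + 3 = m + 1 + 2 from rfl, ch2 (m + 1)]; rw [ih]
      _ = (m + 1 + 3) * (m + 1 + 2) * (m + 1 + 1) := by ring

lemma ch4 (n : ℕ) : (n + 4).choose 4 * 24 = (n + 4) * (n + 3) * (n + 2) * (n + 1) := by
  induction n with
  | zero => rfl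
  | succ m ih =>
    have h : (m + 1 + 4).choose 4 = (m + 4).choose 3 + (m + 4).choose 4 :=
      Nat.choose_succ_succ (m + 4) 3
    calc (m + 1 + 4).choose 4 * 24 = (m + 4).choose 3 * 6 * 4 + (m + 4).choose 4 * 24 := by
          rw [h]; ring
      _ = (m + 4) * (m + 3) * (m + 2) * 4 + (m + 4) * (m + 3) * (m + 2) * (m + 1) := by
          rw [show m + 4 = m + 1 + 3 from rfl, ch3 (m + 1)]; rw [ih]
      _ = (m + 1 + 4) * (m + 1 + 3) * (m + 1 + 2) * (m + 1 + 1) := by ring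

variable (p : ℕ) [Fact p.Prime]

lemma norm_natCast_le_one (n : ℕ) : ‖(n : ℚ_[p])‖ ≤ 1 := by
  have h := Padic.norm_int_le_one (p := p) (n : ℤ)
  push_cast at h
  exact h

lemma norm_natCast_eq_one {n : ℕ} (h : ¬ p ∣ n) : ‖(n : ℚ_[p])‖ = 1 := by
  refine le_antisymm (norm_natCast_le_one p n) ?_
  by_contra h'
  push_neg at h'
  have h2 := (Padic.norm_intCast_lt_one_iff (p := p) (k := (n : ℤ))).mp (by push_cast; exact h')
  exact h (by exact_mod_cast h2)

lemma bern_norm : ∀ n : ℕ, n + 1 < p → ‖((bernoulli n : ℚ) : ℚ_[p])‖ ≤ 1 := by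
  intro n
  induction n using Nat.strong_induction_on with
  | _ n ih =>
    intro hn
    match n, hn with
    | 0, _ => simp
    | (m + 1), hn =>
      have key := sum_bernoulli (m + 2)
      rw [if_neg (by omega), Finset.sum_range_succ] at key
      have hcc : (m + 2).choose (m + 1) = m + 2 := Nat.choose_succ_self_right (m + 1)
      rw [hcc] at key
      have hm2 : ((m : ℚ) + 2) ≠ 0 := by positivity
      have hb : (bernoulli (m + 1) : ℚ) =
          -(∑ k ∈ range (m + 1), ((m + 2).choose k : ℚ) * bernoulli k) / ((m + 2 : ℕ) : ℚ) := by
        field_simp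
        push_cast at key ⊢
        linarith [key]
      have hbq : ((bernoulli (m + 1) : ℚ) : ℚ_[p]) =
          -(∑ k ∈ range (m + 1), (((m + 2).choose k : ℕ) : ℚ_[p]) * ((bernoulli k : ℚ) : ℚ_[p])) /
            ((m + 2 : ℕ) : ℚ_[p]) := by
        rw [hb]; push_cast; ring
      rw [hbq, norm_div, norm_neg]
      rw [norm_natCast_eq_one p (by
        intro hdvd
        have := Nat.le_of_dvd (by omega) hdvd
        omega)]
      rw [div_one]
      apply IsUltrametricDist.norm_sum_le_of_forall_le_of_nonneg zero_le_one
      intro k hk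
      rw [norm_mul]
      have h1 : ‖(((m + 2).choose k : ℕ) : ℚ_[p])‖ ≤ 1 := norm_natCast_le_one p _
      have h2 : ‖((bernoulli k : ℚ) : ℚ_[p])‖ ≤ 1 := by
        have hk' := Finset.mem_range.mp hk
        exact ih k (by omega) (by omega)
      calc ‖(((m + 2).choose k : ℕ) : ℚ_[p])‖ * ‖((bernoulli k : ℚ) : ℚ_[p])‖
          ≤ 1 * 1 := mul_le_mul h1 h2 (norm_nonneg _) zero_le_one
        _ = 1 := by ring

end Stmt17Aux

open Finset Stmt17Aux in
theorem stmt17 (p : ℕ) [Fact p.Prime] (hp7 : 7 ≤ p) (h3 : p % 4 = 3) :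
    ‖((Sps p (p - 1) : ℚ_[p]) - (p : ℚ_[p]) ^ 2 / 2 * (Sps (p - 1) (p - 1) : ℚ_[p]) -
      (-((p : ℚ_[p]) ^ 5 / 24) * ((p : ℚ_[p]) - 1) * ((p : ℚ_[p]) - 2) *
        ((bernoulli (p - 3) : ℚ) : ℚ_[p])))‖ ≤ (p : ℝ) ^ (-(6 : ℤ)) := by
  have hp : p.Prime := Fact.out
  have hpodd : p % 2 = 1 := Nat.odd_iff.mp (hp.odd_of_ne_two (by omega))
  have hq0 : (p : ℚ_[p]) ≠ 0 := Nat.cast_ne_zero.mpr (by omega)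
  have h2z : (2 : ℚ_[p]) ≠ 0 := two_ne_zero
  have hp1cast : (((p + 1 : ℕ)) : ℚ_[p]) = (p : ℚ_[p]) + 1 := by push_cast; ring
  have hp1z : ((p : ℚ_[p]) + 1) ≠ 0 := by
    rw [← hp1cast]; exact Nat.cast_ne_zero.mpr (by omega)
  -- power sums as range sums
  have e0 : ∀ r : ℕ, r ≠ 0 → ((Sps r (p - 1) : ℤ) : ℚ) = ∑ k ∈ range p, (k : ℚ) ^ r := by
    intro r hr
    have h1 : Finset.Icc 1 (p - 1) = Finset.Ico 1 p := by
      rw [← Finset.Ico_add_one_right_eq_Icc]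
      congr 1
      omega
    rw [Sps]
    push_cast
    rw [h1, Finset.range_eq_Ico, Finset.sum_eq_sum_Ico_succ_bot (by omega : 0 < p)]
    rw [Nat.cast_zero, zero_pow hr, zero_add]
  have e1 : ((Sps p (p - 1) : ℤ) : ℚ) =
      ∑ i ∈ range (p + 1), bernoulli i * ((p + 1).choose i) * (p : ℚ) ^ (p + 1 - i) / (p + 1) := by
    rw [e0 p (by omega), sum_range_pow]
  have e2 : ((Sps (p - 1) (p - 1) : ℤ) : ℚ) =
      ∑ i ∈ range p, bernoulli i * (p.choose i) * (p : ℚ) ^ (p - i) / p := by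
    rw [e0 (p - 1) (by omega), sum_range_pow]
    rw [show p - 1 + 1 = p by omega]
    have hd : ((p - 1 : ℕ) : ℚ) + 1 = (p : ℚ) := by
      push_cast [Nat.cast_sub (show 1 ≤ p by omega)]
      ring
    rw [hd]
  -- cast to ℚ_[p]
  have hA : ((Sps p (p - 1) : ℤ) : ℚ_[p]) = ∑ i ∈ range (p + 1),
      ((bernoulli i : ℚ) : ℚ_[p]) * (((p + 1).choose i : ℕ) : ℚ_[p]) *
        (p : ℚ_[p]) ^ (p + 1 - i) / ((p : ℚ_[p]) + 1) := by
    have h := congrArg (fun x : ℚ => (x : ℚ_[p])) e1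
    push_cast at h
    exact h
  have hB : ((Sps (p - 1) (p - 1) : ℤ) : ℚ_[p]) = ∑ i ∈ range p,
      ((bernoulli i : ℚ) : ℚ_[p]) * ((p.choose i : ℕ) : ℚ_[p]) *
        (p : ℚ_[p]) ^ (p - i) / (p : ℚ_[p]) := by
    have h := congrArg (fun x : ℚ => (x : ℚ_[p])) e2
    push_cast at h
    exact h
  have hBp : ((bernoulli p : ℚ) : ℚ_[p]) = 0 := by
    rw [bernoulli_eq_bernoulli'_of_ne_one (by omega),
      bernoulli'_eq_zero_of_odd (Nat.odd_iff.mpr hpodd) (by omega)]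
    simp
  have hB' : ((Sps (p - 1) (p - 1) : ℤ) : ℚ_[p]) = ∑ i ∈ range (p + 1),
      ((bernoulli i : ℚ) : ℚ_[p]) * ((p.choose i : ℕ) : ℚ_[p]) *
        (p : ℚ_[p]) ^ (p - i) / (p : ℚ_[p]) := by
    rw [hB, Finset.sum_range_succ, hBp]
    simp
  have hM : (-((p : ℚ_[p]) ^ 5 / 24) * ((p : ℚ_[p]) - 1) * ((p : ℚ_[p]) - 2) *
        ((bernoulli (p - 3) : ℚ) : ℚ_[p])) = ∑ i ∈ range (p + 1),
      (if i = p - 3 then (-((p : ℚ_[p]) ^ 5 / 24) * ((p : ℚ_[p]) - 1) * ((p : ℚ_[p]) - 2) *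
        ((bernoulli (p - 3) : ℚ) : ℚ_[p])) else 0) := by
    rw [Finset.sum_ite_eq' (range (p + 1)) (p - 3)]
    rw [if_pos (Finset.mem_range.mpr (by omega))]
  rw [hA, hB', hM, Finset.mul_sum, ← Finset.sum_sub_distrib, ← Finset.sum_sub_distrib]
  apply IsUltrametricDist.norm_sum_le_of_forall_le_of_nonneg (by positivity)
  intro i hi
  have hi' : i < p + 1 := Finset.mem_range.mp hi
  have hppos : (0 : ℝ) ≤ (p : ℝ) ^ (-(6 : ℤ)) := by positivity
  by_cases hi3 : i = p - 3
  · -- main term: exact cancellation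
    refine le_trans (le_of_eq (norm_eq_zero.mpr ?_)) hppos
    subst hi3
    rw [if_pos rfl]
    have hsym4 : (p + 1).choose (p - 3) = (p + 1).choose 4 := by
      rw [show p - 3 = (p + 1) - 4 by omega, Nat.choose_symm (by omega)]
    have hsym3 : p.choose (p - 3) = p.choose 3 := Nat.choose_symm (by omega)
    have h4 := ch4 (p - 3)
    rw [show p - 3 + 4 = p + 1 by omega, show p - 3 + 3 = p by omega,
      show p - 3 + 2 = p - 1 by omega, show p - 3 + 1 = p - 2 by omega] at h4
    have h3' := ch3 (p - 3)
    rw [show p - 3 + 3 = p by omega, show p - 3 + 2 = p - 1 by omega,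
      show p - 3 + 1 = p - 2 by omega] at h3'
    have hc4 : (((p + 1).choose 4 : ℕ) : ℚ_[p]) * 24 =
        ((p : ℚ_[p]) + 1) * (p : ℚ_[p]) * ((p : ℚ_[p]) - 1) * ((p : ℚ_[p]) - 2) := by
      have hcast := congrArg (fun x : ℕ => (x : ℚ_[p])) h4
      push_cast [Nat.cast_sub (show 1 ≤ p by omega), Nat.cast_sub (show 2 ≤ p by omega)] at hcast
      linear_combination hcast
    have hc3 : ((p.choose 3 : ℕ) : ℚ_[p]) * 6 =
        (p : ℚ_[p]) * ((p : ℚ_[p]) - 1) * ((p : ℚ_[p]) - 2) := by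
      have hcast := congrArg (fun x : ℕ => (x : ℚ_[p])) h3'
      push_cast [Nat.cast_sub (show 1 ≤ p by omega), Nat.cast_sub (show 2 ≤ p by omega)] at hcast
      linear_combination hcast
    have v4 : (((p + 1).choose 4 : ℕ) : ℚ_[p]) =
        ((p : ℚ_[p]) + 1) * (p : ℚ_[p]) * ((p : ℚ_[p]) - 1) * ((p : ℚ_[p]) - 2) / 24 := by
      field_simp
      linear_combination hc4
    have v3 : ((p.choose 3 : ℕ) : ℚ_[p]) =
        (p : ℚ_[p]) * ((p : ℚ_[p]) - 1) * ((p : ℚ_[p]) - 2) / 6 := by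
      field_simp
      linear_combination hc3
    rw [hsym4, hsym3, v4, v3, show p + 1 - (p - 3) = 4 by omega, show p - (p - 3) = 3 by omega]
    field_simp
    ring
  · by_cases hi1 : i = p - 1
    · -- B_{p-1} term: coefficient vanishes
      refine le_trans (le_of_eq (norm_eq_zero.mpr ?_)) hppos
      subst hi1
      rw [if_neg (by omega)]
      have hsym2 : (p + 1).choose (p - 1) = (p + 1).choose 2 := by
        rw [show p - 1 = (p + 1) - 2 by omega, Nat.choose_symm (by omega)]
      have hsym1 : p.choose (p - 1) = p.choose 1 := by
        rw [show p - 1 = p - 1 from rfl, ← Nat.choose_symm (show 1 ≤ p by omega)]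
      have h2' := ch2 (p - 1)
      rw [show p - 1 + 2 = p + 1 by omega, show p - 1 + 1 = p by omega] at h2'
      have hc2 : (((p + 1).choose 2 : ℕ) : ℚ_[p]) * 2 = ((p : ℚ_[p]) + 1) * (p : ℚ_[p]) := by
        have hcast := congrArg (fun x : ℕ => (x : ℚ_[p])) h2'
        push_cast at hcast
        linear_combination hcast
      rw [hsym2, hsym1, Nat.choose_one_right,
        show p + 1 - (p - 1) = 2 by omega, show p - (p - 1) = 1 by omega]
      have v2 : (((p + 1).choose 2 : ℕ) : ℚ_[p]) = ((p : ℚ_[p]) + 1) * (p : ℚ_[p]) / 2 := by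
        field_simp
        linear_combination hc2
      rw [v2]
      field_simp
      ring
    · by_cases hbig : p - 4 ≤ i
      · -- i ∈ {p-4, p-2, p}: odd Bernoulli vanishes
        refine le_trans (le_of_eq (norm_eq_zero.mpr ?_)) hppos
        have hoddi : i % 2 = 1 := by omega
        have hb0 : ((bernoulli i : ℚ) : ℚ_[p]) = 0 := by
          rw [bernoulli_eq_bernoulli'_of_ne_one (by omega),
            bernoulli'_eq_zero_of_odd (Nat.odd_iff.mpr hoddi) (by omega)]
          simp
        rw [hb0, if_neg hi3]
        ring
      · -- small index: p-adic bound
        have hile : i ≤ p - 5 := by omega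
        rw [if_neg hi3, sub_zero]
        have hy : (p : ℚ_[p]) ^ 2 / 2 * (((bernoulli i : ℚ) : ℚ_[p]) * ((p.choose i : ℕ) : ℚ_[p]) *
            (p : ℚ_[p]) ^ (p - i) / (p : ℚ_[p])) =
            ((bernoulli i : ℚ) : ℚ_[p]) * ((p.choose i : ℕ) : ℚ_[p]) *
              (p : ℚ_[p]) ^ (p + 1 - i) / 2 := by
          rw [show p + 1 - i = (p - i) + 1 by omega, pow_succ]
          field_simp
          ring
        rw [hy]
        have hbn : ‖((bernoulli i : ℚ) : ℚ_[p])‖ ≤ 1 := bern_norm p i (by omega)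
        have key : ∀ (b u : ℚ_[p]) (c k : ℕ), ‖b‖ ≤ 1 → ‖u‖ = 1 → 6 ≤ k →
            ‖b * (c : ℚ_[p]) * (p : ℚ_[p]) ^ k / u‖ ≤ (p : ℝ) ^ (-(6 : ℤ)) := by
          intro b u c k hb hu hk
          rw [norm_div, norm_mul, norm_mul, norm_pow, Padic.norm_p, hu, div_one]
          calc ‖b‖ * ‖(c : ℚ_[p])‖ * (p : ℝ)⁻¹ ^ k ≤ 1 * 1 * (p : ℝ)⁻¹ ^ k := by
                gcongr
                exact norm_natCast_le_one p c
            _ = (p : ℝ) ^ (-(k : ℤ)) := by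
                rw [one_mul, one_mul, inv_pow, ← zpow_natCast, ← zpow_neg]
            _ ≤ (p : ℝ) ^ (-(6 : ℤ)) := by
                apply zpow_le_zpow_right₀ (by exact_mod_cast hp.one_lt.le)
                have : (6 : ℤ) ≤ (k : ℤ) := by exact_mod_cast hk
                omega
        have hu1 : ‖(p : ℚ_[p]) + 1‖ = 1 := by
          rw [← hp1cast]
          apply norm_natCast_eq_one
          intro hd
          have h1 : p ∣ 1 := by
            have := Nat.dvd_sub hd (dvd_refl p)
            simpa using this
          have h1' := Nat.dvd_one.mp h1
          omega
        have hu2 : ‖(2 : ℚ_[p])‖ = 1 := by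
          have h22 : ((2 : ℕ) : ℚ_[p]) = (2 : ℚ_[p]) := by norm_num
          rw [← h22]
          apply norm_natCast_eq_one
          intro hd
          have := Nat.le_of_dvd (by omega) hd
          omega
        have hX := key _ _ ((p + 1).choose i) (p + 1 - i) hbn hu1 (by omega)
        have hY := key _ _ (p.choose i) (p + 1 - i) hbn hu2 (by omega)
        refine le_trans ?_ (max_le hX hY)
        rw [sub_eq_add_neg]
        refine le_trans (Padic.nonarchimedean _ _) (le_of_eq ?_)
        rw [norm_neg]
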